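/- Let G be a simple connected graph with diameter 2 and let x be a vertex of G. Let p be a pebble distribution on G of size m. Suppose that no vertex of {x} ∪ N(x) is reachable from any pebble distribution q with q(v) ≤ p(v) for all v and with size at most 5 (that is, {x} ∪ N(x) is not reachable using only five pebbles of p). Then G has at least ⌊(m² + 3)/2⌋ vertices. -/

import Mathlib

open Finset

variable {V : Type*}

/-- A pebbling move: remove two pebbles at a vertex `v` and add one pebble at an
adjacent vertex `u`. -/
def IsPebblingMove (G : SimpleGraph V) (p p' : V → ℕ) : Prop :=
  ∃ v u, G.Adj v u ∧ 2 ≤ p v ∧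
    p' v = p v - 2 ∧ p' u = p u + 1 ∧ ∀ z, z ≠ v → z ≠ u → p' z = p z

/-- A strict rubbling move: remove one pebble each at distinct vertices `v` and `w`,
both adjacent to `u`, and add one pebble at `u`. -/
def IsStrictRubblingMove (G : SimpleGraph V) (p p' : V → ℕ) : Prop :=
  ∃ v w u, v ≠ w ∧ G.Adj v u ∧ G.Adj w u ∧ 1 ≤ p v ∧ 1 ≤ p w ∧
    p' v = p v - 1 ∧ p' w = p w - 1 ∧ p' u = p u + 1 ∧
    ∀ z, z ≠ v → z ≠ w → z ≠ u → p' z = p z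

/-- A rubbling move is a pebbling move or a strict rubbling move. -/
def IsRubblingMove (G : SimpleGraph V) (p p' : V → ℕ) : Prop :=
  IsPebblingMove G p p' ∨ IsStrictRubblingMove G p p'

/-- A vertex `x` is reachable from the pebble distribution `p` if some executable
sequence of rubbling moves leads to a distribution with a pebble on `x`. -/
def RubblingReachable (G : SimpleGraph V) (p : V → ℕ) (x : V) : Prop :=
  ∃ q : V → ℕ, Relation.ReflTransGen (IsRubblingMove G) p q ∧ 1 ≤ q x

/-- The rubbling number: the least `m` such that every vertex is reachable from
every pebble distribution of size `m`. -/
noncomputable def rubblingNumber (G : SimpleGraph V) [Fintype V] : ℕ :=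
  sInf {m | ∀ p : V → ℕ, ∑ v, p v = m → ∀ x, RubblingReachable G p x}

/-- The optimal rubbling number: the least size of a pebble distribution from which
every vertex is reachable. -/
noncomputable def optimalRubblingNumber (G : SimpleGraph V) [Fintype V] : ℕ :=
  sInf {m | ∃ p : V → ℕ, ∑ v, p v = m ∧ ∀ x, RubblingReachable G p x}

open Classical in
noncomputable def rbDelta (v z : V) : ℕ := if z = v then 1 else 0

lemma rbDelta_self (v : V) : rbDelta v v = 1 := by unfold rbDelta; simp

lemma rbDelta_ne {v z : V} (h : z ≠ v) : rbDelta v z = 0 := by unfold rbDelta; simp [h]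

lemma sum_rbDelta [Fintype V] (v : V) : ∑ z, rbDelta v z = 1 := by
  classical
  unfold rbDelta
  simp

lemma rb_strict {G : SimpleGraph V} {s t u : V} (hst : s ≠ t) (hsu : G.Adj s u)
    (htu : G.Adj t u) (rest : V → ℕ) {p p' : V → ℕ}
    (hp : ∀ z, p z = rbDelta s z + rbDelta t z + rest z)
    (hp' : ∀ z, p' z = rbDelta u z + rest z) : IsRubblingMove G p p' := by
  refine Or.inr ⟨s, t, u, hst, hsu, htu, ?_, ?_, ?_, ?_, ?_, ?_⟩
  · rw [hp s, rbDelta_self]; omega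
  · rw [hp t, rbDelta_self]; omega
  · rw [hp' s, hp s, rbDelta_self, rbDelta_ne hst, rbDelta_ne hsu.ne]; omega
  · rw [hp' t, hp t, rbDelta_self, rbDelta_ne (Ne.symm hst), rbDelta_ne htu.ne]; omega
  · rw [hp' u, hp u, rbDelta_self, rbDelta_ne hsu.ne', rbDelta_ne htu.ne']; omega
  · intro z h1 h2 h3
    rw [hp' z, hp z, rbDelta_ne h1, rbDelta_ne h2, rbDelta_ne h3]

lemma rb_pebble {G : SimpleGraph V} {v u : V} (hvu : G.Adj v u) (rest : V → ℕ)
    {p p' : V → ℕ}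
    (hp : ∀ z, p z = rbDelta v z + rbDelta v z + rest z)
    (hp' : ∀ z, p' z = rbDelta u z + rest z) : IsRubblingMove G p p' := by
  refine Or.inl ⟨v, u, hvu, ?_, ?_, ?_, ?_⟩
  · rw [hp v, rbDelta_self]; omega
  · rw [hp' v, hp v, rbDelta_self, rbDelta_ne hvu.ne]; omega
  · rw [hp' u, hp u, rbDelta_self, rbDelta_ne hvu.ne']; omega
  · intro z h1 h2
    rw [hp' z, hp z, rbDelta_ne h1, rbDelta_ne h2]

lemma rb_reach_self {G : SimpleGraph V} {q : V → ℕ} {y : V} (h : 1 ≤ q y) :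
    RubblingReachable G q y := ⟨q, Relation.ReflTransGen.refl, h⟩

lemma rb_reach_step {G : SimpleGraph V} {q q' : V → ℕ} {y : V}
    (hmv : IsRubblingMove G q q') (h : RubblingReachable G q' y) :
    RubblingReachable G q y := by
  obtain ⟨r, hc, hr⟩ := h
  exact ⟨r, Relation.ReflTransGen.head hmv hc, hr⟩

lemma rb_le_of_support {p : V → ℕ} (l : List V) (hnd : l.Nodup)
    (hp : ∀ v ∈ l, 1 ≤ p v) : ∀ z, (l.map (fun v => rbDelta v z)).sum ≤ p z := by
  induction l with
  | nil => intro z; simp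
  | cons v l ih =>
    intro z
    rcases List.nodup_cons.mp hnd with ⟨hv, hnd'⟩
    rcases eq_or_ne z v with rfl | hz
    · have hz0 : ((l.map (fun v' => rbDelta v' z)).sum) = 0 := by
        apply List.sum_eq_zero
        intro y hy
        simp only [List.mem_map] at hy
        obtain ⟨u, hu, rfl⟩ := hy
        exact rbDelta_ne (fun hzu => hv (hzu ▸ hu))
      simp only [List.map_cons, List.sum_cons, hz0, rbDelta_self]
      have := hp z (List.mem_cons_self)
      omega
    · have := ih hnd' (fun u hu => hp u (List.mem_cons_of_mem _ hu)) z
      simp only [List.map_cons, List.sum_cons, rbDelta_ne hz]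
      omega

/-- The key blocking hypothesis. -/
def Blocked [Fintype V] (G : SimpleGraph V) (x : V) (p : V → ℕ) : Prop :=
  ∀ q : V → ℕ, (∀ v, q v ≤ p v) → ∑ v, q v ≤ 5 →
    ∀ y, y = x ∨ G.Adj x y → ¬ RubblingReachable G q y

variable [Fintype V] {G : SimpleGraph V} {x : V} {p : V → ℕ}

lemma kill1 (h : Blocked G x p) {v : V} (hv : 1 ≤ p v) (hy : v = x ∨ G.Adj x v) :
    False := by
  refine h (fun z => rbDelta v z) ?_ ?_ v hy (rb_reach_self (by simp [rbDelta_self])) 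
  · have := rb_le_of_support (p := p) [v] (by simp) (by simpa using hv)
    intro z; have := this z; simpa using this
  · rw [sum_rbDelta]; omega

lemma kill2 (h : Blocked G x p) {v a : V} (hv : 2 ≤ p v) (hva : G.Adj v a)
    (hy : a = x ∨ G.Adj x a) : False := by
  refine h (fun z => rbDelta v z + rbDelta v z) ?_ ?_ a hy ?_
  · intro z
    beta_reduce
    rcases eq_or_ne z v with rfl | hz
    · rw [rbDelta_self]; omega
    · rw [rbDelta_ne hz]; omega
  · simp only [Finset.sum_add_distrib, sum_rbDelta]; omega
  · exact rb_reach_step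
      (rb_pebble hva (fun _ => 0) (fun z => by beta_reduce; omega) (fun z => rfl))
      (rb_reach_self (by simp [rbDelta_self]))

lemma kill_pair (h : Blocked G x p) {s t u : V} (hst : s ≠ t) (hs : 1 ≤ p s)
    (ht : 1 ≤ p t) (hsu : G.Adj s u) (htu : G.Adj t u)
    (hy : u = x ∨ G.Adj x u) : False := by
  have hle := rb_le_of_support (p := p) [s, t] (by simp [hst])
    (by intro v hv; rcases List.mem_pair.mp hv with rfl | rfl <;> assumption)
  refine h (fun z => rbDelta s z + rbDelta t z) ?_ ?_ u hy ?_
  · intro z; have := hle z; simpa using this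
  · simp only [Finset.sum_add_distrib, sum_rbDelta]; omega
  · exact rb_reach_step
      (rb_strict hst hsu htu (fun _ => 0) (fun z => by beta_reduce; omega) (fun z => rfl))
      (rb_reach_self (by simp [rbDelta_self]))

lemma kill3b (h : Blocked G x p) {s t w a : V} (hst : s ≠ t) (hs : 1 ≤ p s)
    (ht : 1 ≤ p t) (hw : 1 ≤ p w) (hsw : G.Adj s w) (htw : G.Adj t w)
    (hwa : G.Adj w a) (hy : a = x ∨ G.Adj x a) : False := by
  have hle := rb_le_of_support (p := p) [s, t, w] (by simp [hst, hsw.ne, htw.ne])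
    (by intro v hv; simp only [List.mem_cons, List.not_mem_nil, or_false] at hv
        rcases hv with rfl | rfl | rfl <;> assumption)
  refine h (fun z => rbDelta s z + rbDelta t z + rbDelta w z) ?_ ?_ a hy ?_
  · intro z; have := hle z; beta_reduce at this ⊢; simp at this; omega
  · simp only [Finset.sum_add_distrib, sum_rbDelta]; omega
  · refine rb_reach_step
      (rb_strict hst hsw htw (fun z => rbDelta w z) (fun z => rfl) (fun z => rfl))
      (rb_reach_step (q' := fun z => rbDelta a z)
        (rb_pebble hwa (fun _ => 0) (fun z => by beta_reduce; omega) (fun z => rfl))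
        (rb_reach_self (by simp [rbDelta_self])))

lemma kill3a (h : Blocked G x p) {s1 s2 r u a : V} (h12 : s1 ≠ s2) (hr1 : r ≠ s1)
    (hr2 : r ≠ s2) (hru : r ≠ u) (hp1 : 1 ≤ p s1) (hp2 : 1 ≤ p s2) (hpr : 1 ≤ p r)
    (h1u : G.Adj s1 u) (h2u : G.Adj s2 u) (hra : G.Adj r a) (hua : G.Adj u a)
    (hy : a = x ∨ G.Adj x a) : False := by
  have hle := rb_le_of_support (p := p) [s1, s2, r]
    (by simp [h12, hr1.symm, hr2.symm])
    (by intro v hv; simp only [List.mem_cons, List.not_mem_nil, or_false] at hv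
        rcases hv with rfl | rfl | rfl <;> assumption)
  refine h (fun z => rbDelta s1 z + rbDelta s2 z + rbDelta r z) ?_ ?_ a hy ?_
  · intro z; have := hle z; beta_reduce at this ⊢; simp at this; omega
  · simp only [Finset.sum_add_distrib, sum_rbDelta]; omega
  · refine rb_reach_step
      (rb_strict h12 h1u h2u (fun z => rbDelta r z) (fun z => rfl) (fun z => rfl))
      (rb_reach_step (q' := fun z => rbDelta a z)
        (rb_strict hru hra hua (fun _ => 0) (fun z => by beta_reduce; omega) (fun z => rfl))
        (rb_reach_self (by simp [rbDelta_self])))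

lemma kill4a (h : Blocked G x p) {s1 s2 s3 s4 u a : V}
    (h12 : s1 ≠ s2) (h13 : s1 ≠ s3) (h14 : s1 ≠ s4) (h23 : s2 ≠ s3) (h24 : s2 ≠ s4)
    (h34 : s3 ≠ s4) (hp1 : 1 ≤ p s1) (hp2 : 1 ≤ p s2) (hp3 : 1 ≤ p s3)
    (hp4 : 1 ≤ p s4) (h1u : G.Adj s1 u) (h2u : G.Adj s2 u) (h3u : G.Adj s3 u)
    (h4u : G.Adj s4 u) (hua : G.Adj u a) (hy : a = x ∨ G.Adj x a) : False := by
  have hle := rb_le_of_support (p := p) [s1, s2, s3, s4]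
    (by simp [h12, h13, h14, h23, h24, h34])
    (by intro v hv; simp only [List.mem_cons, List.not_mem_nil, or_false] at hv
        rcases hv with rfl | rfl | rfl | rfl <;> assumption)
  refine h (fun z => rbDelta s1 z + rbDelta s2 z + rbDelta s3 z + rbDelta s4 z)
    ?_ ?_ a hy ?_
  · intro z; have := hle z; beta_reduce at this ⊢; simp at this; omega
  · simp only [Finset.sum_add_distrib, sum_rbDelta]; omega
  · refine rb_reach_step (q' := fun z => rbDelta u z + (rbDelta s3 z + rbDelta s4 z))
      (rb_strict h12 h1u h2u (fun z => rbDelta s3 z + rbDelta s4 z)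
        (fun z => by beta_reduce; omega) (fun z => rfl))
      (rb_reach_step (q' := fun z => rbDelta u z + rbDelta u z)
        (rb_strict h34 h3u h4u (fun z => rbDelta u z)
          (fun z => by beta_reduce; omega) (fun z => rfl))
        (rb_reach_step (q' := fun z => rbDelta a z)
          (rb_pebble hua (fun _ => 0) (fun z => by beta_reduce; omega) (fun z => rfl))
          (rb_reach_self (by simp [rbDelta_self]))))

lemma kill4b (h : Blocked G x p) {s1 s2 s3 s4 u u' a : V}
    (h12 : s1 ≠ s2) (h13 : s1 ≠ s3) (h14 : s1 ≠ s4) (h23 : s2 ≠ s3) (h24 : s2 ≠ s4)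
    (h34 : s3 ≠ s4) (huu : u ≠ u') (hp1 : 1 ≤ p s1) (hp2 : 1 ≤ p s2)
    (hp3 : 1 ≤ p s3) (hp4 : 1 ≤ p s4) (h1u : G.Adj s1 u) (h2u : G.Adj s2 u)
    (h3u : G.Adj s3 u') (h4u : G.Adj s4 u') (hua : G.Adj u a) (hua' : G.Adj u' a)
    (hy : a = x ∨ G.Adj x a) : False := by
  have hle := rb_le_of_support (p := p) [s1, s2, s3, s4]
    (by simp [h12, h13, h14, h23, h24, h34])
    (by intro v hv; simp only [List.mem_cons, List.not_mem_nil, or_false] at hv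
        rcases hv with rfl | rfl | rfl | rfl <;> assumption)
  refine h (fun z => rbDelta s1 z + rbDelta s2 z + rbDelta s3 z + rbDelta s4 z)
    ?_ ?_ a hy ?_
  · intro z; have := hle z; beta_reduce at this ⊢; simp at this; omega
  · simp only [Finset.sum_add_distrib, sum_rbDelta]; omega
  · refine rb_reach_step (q' := fun z => rbDelta u z + (rbDelta s3 z + rbDelta s4 z))
      (rb_strict h12 h1u h2u (fun z => rbDelta s3 z + rbDelta s4 z)
        (fun z => by beta_reduce; omega) (fun z => rfl))
      (rb_reach_step (q' := fun z => rbDelta u' z + rbDelta u z)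
        (rb_strict h34 h3u h4u (fun z => rbDelta u z)
          (fun z => by beta_reduce; omega) (fun z => rfl))
        (rb_reach_step (q' := fun z => rbDelta a z)
          (rb_strict huu hua hua' (fun _ => 0) (fun z => by beta_reduce; omega) (fun z => rfl))
          (rb_reach_self (by simp [rbDelta_self]))))

lemma kill5 (h : Blocked G x p) {s1 s2 s3 s4 s5 w w' b : V}
    (h12 : s1 ≠ s2) (h13 : s1 ≠ s3) (h14 : s1 ≠ s4) (h15 : s1 ≠ s5)
    (h23 : s2 ≠ s3) (h24 : s2 ≠ s4) (h25 : s2 ≠ s5) (h34 : s3 ≠ s4)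
    (h35 : s3 ≠ s5) (h45 : s4 ≠ s5) (hww : w ≠ w')
    (hp1 : 1 ≤ p s1) (hp2 : 1 ≤ p s2) (hp3 : 1 ≤ p s3) (hp4 : 1 ≤ p s4)
    (hp5 : 1 ≤ p s5) (h2w : G.Adj s2 w) (h3w : G.Adj s3 w) (h4w : G.Adj s4 w')
    (h5w : G.Adj s5 w') (hw1 : G.Adj w s1) (hw'1 : G.Adj w' s1)
    (h1b : G.Adj s1 b) (hy : b = x ∨ G.Adj x b) : False := by
  have hle := rb_le_of_support (p := p) [s1, s2, s3, s4, s5]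
    (by simp [h12, h13, h14, h15, h23, h24, h25, h34, h35, h45])
    (by intro v hv; simp only [List.mem_cons, List.not_mem_nil, or_false] at hv
        rcases hv with rfl | rfl | rfl | rfl | rfl <;> assumption)
  refine h (fun z => rbDelta s1 z + rbDelta s2 z + rbDelta s3 z + rbDelta s4 z
      + rbDelta s5 z) ?_ ?_ b hy ?_
  · intro z; have := hle z; beta_reduce at this ⊢; simp at this; omega
  · simp only [Finset.sum_add_distrib, sum_rbDelta]; omega
  · refine rb_reach_step
      (q' := fun z => rbDelta w z + (rbDelta s1 z + rbDelta s4 z + rbDelta s5 z))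
      (rb_strict h23 h2w h3w (fun z => rbDelta s1 z + rbDelta s4 z + rbDelta s5 z)
        (fun z => by beta_reduce; omega) (fun z => rfl))
      (rb_reach_step
        (q' := fun z => rbDelta w' z + (rbDelta w z + rbDelta s1 z))
        (rb_strict h45 h4w h5w (fun z => rbDelta w z + rbDelta s1 z)
          (fun z => by beta_reduce; omega) (fun z => rfl))
        (rb_reach_step (q' := fun z => rbDelta s1 z + rbDelta s1 z)
          (rb_strict hww hw1 hw'1 (fun z => rbDelta s1 z)
            (fun z => by beta_reduce; omega) (fun z => rfl))
          (rb_reach_step (q' := fun z => rbDelta b z)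
            (rb_pebble h1b (fun _ => 0) (fun z => by beta_reduce; omega) (fun z => rfl))
            (rb_reach_self (by simp [rbDelta_self])))))

lemma common_mid (G : SimpleGraph V) (hconn : G.Connected) (hdiam : G.diam = 2)
    {u v : V} (hne : u ≠ v) (hadj : ¬ G.Adj u v) :
    ∃ w, G.Adj u w ∧ G.Adj w v := by
  have hnt : G.ediam ≠ ⊤ :=
    SimpleGraph.ediam_ne_top_of_diam_ne_zero (by rw [hdiam]; omega)
  have hle : G.dist u v ≤ 2 := hdiam ▸ SimpleGraph.dist_le_diam hnt
  have hne0 : G.dist u v ≠ 0 :=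
    SimpleGraph.dist_ne_zero_iff_ne_and_reachable.mpr ⟨hne, hconn.preconnected u v⟩
  have hne1 : G.dist u v ≠ 1 := fun h1 => hadj (SimpleGraph.dist_eq_one_iff_adj.mp h1)
  obtain ⟨W, hW⟩ := (hconn.preconnected u v).exists_walk_length_eq_dist
  have hlen : W.length = 2 := by omega
  cases W with
  | nil => simp at hlen
  | cons h1 W' =>
    cases W' with
    | nil => simp at hlen
    | cons h2 W'' =>
      have hzl : W''.length = 0 := by
        simp only [SimpleGraph.Walk.length_cons] at hlen; omega
      have hz := SimpleGraph.Walk.eq_of_length_eq_zero hzl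
      exact ⟨_, h1, hz ▸ h2⟩

lemma comb {α : Type*} [DecidableEq α] :
    ∀ T : Finset (Finset α), (∀ τ ∈ T, τ.card = 3) →
      (∀ τ ∈ T, ∀ τ' ∈ T, τ ≠ τ' → (τ ∩ τ').card = 0 ∨ (τ ∩ τ').card = 2) →
      3 * (T.biUnion fun τ => τ.powersetCard 2).card ≤
        6 * T.card + (T.biUnion id).card := by
  intro T
  induction T using Finset.strongInduction with
  | _ T ih =>
    intro h3 hint
    rcases T.eq_empty_or_nonempty with rfl | ⟨τ0, hτ0⟩
    · simp
    have hins : T = insert τ0 (T.erase τ0) := (Finset.insert_erase hτ0).symm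
    set T' := T.erase τ0 with hT'
    have hss : T' ⊂ T := Finset.erase_ssubset hτ0
    have ih' := ih T' hss (fun τ hτ => h3 τ (Finset.mem_of_mem_erase hτ))
      (fun τ hτ τ' hτ' hne =>
        hint τ (Finset.mem_of_mem_erase hτ) τ' (Finset.mem_of_mem_erase hτ') hne)
    have hcard : T.card = T'.card + 1 := by
      rw [hT', Finset.card_erase_of_mem hτ0]
      have := Finset.card_pos.mpr ⟨τ0, hτ0⟩
      omega
    have hP0card : (τ0.powersetCard 2).card = 3 := by
      rw [Finset.card_powersetCard, h3 τ0 hτ0]; rfl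
    by_cases hshare : ∃ τ' ∈ T', (τ0 ∩ τ').card = 2
    · obtain ⟨τ', hτ'T, hτ'2⟩ := hshare
      have he0' : τ0 ∩ τ' ∈ T'.biUnion (fun τ => τ.powersetCard 2) :=
        Finset.mem_biUnion.mpr ⟨τ', hτ'T,
          Finset.mem_powersetCard.mpr ⟨Finset.inter_subset_right, hτ'2⟩⟩
      have he00 : τ0 ∩ τ' ∈ τ0.powersetCard 2 :=
        Finset.mem_powersetCard.mpr ⟨Finset.inter_subset_left, hτ'2⟩
      have hsub : T.biUnion (fun τ => τ.powersetCard 2) ⊆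
          (T'.biUnion fun τ => τ.powersetCard 2) ∪
            ((τ0.powersetCard 2).erase (τ0 ∩ τ')) := by
        intro e he
        rw [hins, Finset.biUnion_insert] at he
        rcases Finset.mem_union.mp he with he | he
        · rcases eq_or_ne e (τ0 ∩ τ') with rfl | hne
          · exact Finset.mem_union_left _ he0'
          · exact Finset.mem_union_right _ (Finset.mem_erase.mpr ⟨hne, he⟩)
        · exact Finset.mem_union_left _ he
      have h1 : (T.biUnion fun τ => τ.powersetCard 2).card ≤
          (T'.biUnion fun τ => τ.powersetCard 2).card + 2 := by
        calc (T.biUnion fun τ => τ.powersetCard 2).card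
            ≤ ((T'.biUnion fun τ => τ.powersetCard 2) ∪
              ((τ0.powersetCard 2).erase (τ0 ∩ τ'))).card := Finset.card_le_card hsub
          _ ≤ (T'.biUnion fun τ => τ.powersetCard 2).card +
              ((τ0.powersetCard 2).erase (τ0 ∩ τ')).card := Finset.card_union_le _ _
          _ = _ := by rw [Finset.card_erase_of_mem he00, hP0card]
      have h2 : (T'.biUnion id).card ≤ (T.biUnion id).card :=
        Finset.card_le_card (Finset.biUnion_subset_biUnion_of_subset_left _ hss.subset)
      omega
    · push_neg at hshare
      have hdisj : ∀ τ' ∈ T', Disjoint τ0 τ' := by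
        intro τ' hτ'
        have hne : τ0 ≠ τ' := fun hh => (Finset.ne_of_mem_erase hτ') hh.symm
        rcases hint τ0 hτ0 τ' (Finset.mem_of_mem_erase hτ') hne with h0 | h2
        · exact Finset.disjoint_iff_inter_eq_empty.mpr (Finset.card_eq_zero.mp h0)
        · exact absurd h2 (hshare τ' hτ')
      have hVeq : T.biUnion id = τ0 ∪ T'.biUnion id := by
        conv_lhs => rw [hins]
        rw [Finset.biUnion_insert]
        rfl
      have hVd : Disjoint τ0 (T'.biUnion id) := by
        rw [Finset.disjoint_biUnion_right]
        exact fun τ' hτ' => hdisj τ' hτ'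
      have hVcard : (T.biUnion id).card = 3 + (T'.biUnion id).card := by
        rw [hVeq, Finset.card_union_of_disjoint hVd, h3 τ0 hτ0]
      have hsub : T.biUnion (fun τ => τ.powersetCard 2) ⊆
          (T'.biUnion fun τ => τ.powersetCard 2) ∪ τ0.powersetCard 2 := by
        intro e he
        rw [hins, Finset.biUnion_insert] at he
        rcases Finset.mem_union.mp he with he | he
        · exact Finset.mem_union_right _ he
        · exact Finset.mem_union_left _ he
      have h1 : (T.biUnion fun τ => τ.powersetCard 2).card ≤
          (T'.biUnion fun τ => τ.powersetCard 2).card + 3 := by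
        calc (T.biUnion fun τ => τ.powersetCard 2).card
            ≤ _ := Finset.card_le_card hsub
          _ ≤ _ + (τ0.powersetCard 2).card := Finset.card_union_le _ _
          _ = _ + 3 := by rw [hP0card]
      omega

lemma two_distinct {α : Type*} {s : Finset α} (h : 2 ≤ s.card) :
    ∃ a ∈ s, ∃ b ∈ s, a ≠ b := Finset.one_lt_card.mp (by omega)

lemma four_distinct {α : Type*} [DecidableEq α] {s : Finset α} (h : 4 ≤ s.card) :
    ∃ a b c d, a ∈ s ∧ b ∈ s ∧ c ∈ s ∧ d ∈ s ∧
      a ≠ b ∧ a ≠ c ∧ a ≠ d ∧ b ≠ c ∧ b ≠ d ∧ c ≠ d := by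
  obtain ⟨a, ha⟩ := Finset.card_pos.mp (show 0 < s.card by omega)
  have h1 : 3 ≤ (s.erase a).card := by rw [Finset.card_erase_of_mem ha]; omega
  obtain ⟨b, hb⟩ := Finset.card_pos.mp (show 0 < (s.erase a).card by omega)
  have h2 : 2 ≤ ((s.erase a).erase b).card := by
    rw [Finset.card_erase_of_mem hb]; omega
  obtain ⟨c, hc⟩ := Finset.card_pos.mp (show 0 < ((s.erase a).erase b).card by omega)
  have h3 : 1 ≤ (((s.erase a).erase b).erase c).card := by
    rw [Finset.card_erase_of_mem hc]; omega
  obtain ⟨d, hd⟩ := Finset.card_pos.mp (show 0 < (((s.erase a).erase b).erase c).card by omega)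
  simp only [Finset.mem_erase] at hb hc hd
  exact ⟨a, b, c, d, ha, hb.2, hc.2.2, hd.2.2.2,
    fun e => hb.1 e.symm, fun e => hc.2.1 e.symm, fun e => hd.2.2.1 e.symm,
    fun e => hc.1 e.symm, fun e => hd.2.1 e.symm, fun e => hd.1 e.symm⟩

lemma share_one_struct {α : Type*} [DecidableEq α] {τ τ' : Finset α}
    (h3 : τ.card = 3) (h3' : τ'.card = 3) (h1 : (τ ∩ τ').card = 1) :
    ∃ s1 s2 s3 s4 s5, s1 ∈ τ ∧ s1 ∈ τ' ∧ s2 ∈ τ ∧ s3 ∈ τ ∧ s4 ∈ τ' ∧ s5 ∈ τ' ∧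
      s1 ≠ s2 ∧ s1 ≠ s3 ∧ s1 ≠ s4 ∧ s1 ≠ s5 ∧ s2 ≠ s3 ∧ s2 ≠ s4 ∧ s2 ≠ s5 ∧
      s3 ≠ s4 ∧ s3 ≠ s5 ∧ s4 ≠ s5 := by
  obtain ⟨s1, hs1⟩ := Finset.card_eq_one.mp h1
  have hs1τ : s1 ∈ τ ∧ s1 ∈ τ' := by
    have : s1 ∈ τ ∩ τ' := hs1 ▸ Finset.mem_singleton_self s1
    exact ⟨(Finset.mem_inter.mp this).1, (Finset.mem_inter.mp this).2⟩
  have hτe : 2 ≤ (τ.erase s1).card := by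
    rw [Finset.card_erase_of_mem hs1τ.1, h3]
  have hτ'e : 2 ≤ (τ'.erase s1).card := by
    rw [Finset.card_erase_of_mem hs1τ.2, h3']

  obtain ⟨s2, hs2, s3, hs3, h23⟩ := two_distinct hτe
  obtain ⟨s4, hs4, s5, hs5, h45⟩ := two_distinct hτ'e
  simp only [Finset.mem_erase] at hs2 hs3 hs4 hs5
  have hcross : ∀ u, u ∈ τ.erase s1 → u ∈ τ'.erase s1 → False := by
    intro u hu hu'
    simp only [Finset.mem_erase] at hu hu'
    have : u ∈ τ ∩ τ' := Finset.mem_inter.mpr ⟨hu.2, hu'.2⟩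
    rw [hs1] at this
    exact hu.1 (Finset.mem_singleton.mp this)
  refine ⟨s1, s2, s3, s4, s5, hs1τ.1, hs1τ.2, hs2.2, hs3.2, hs4.2, hs5.2,
    fun e => hs2.1 e.symm, fun e => hs3.1 e.symm, fun e => hs4.1 e.symm,
    fun e => hs5.1 e.symm, h23, ?_, ?_, ?_, ?_, h45⟩
  · intro e; exact hcross s2 (Finset.mem_erase.mpr hs2) (e ▸ Finset.mem_erase.mpr hs4)
  · intro e; exact hcross s2 (Finset.mem_erase.mpr hs2) (e ▸ Finset.mem_erase.mpr hs5)
  · intro e; exact hcross s3 (Finset.mem_erase.mpr hs3) (e ▸ Finset.mem_erase.mpr hs4)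
  · intro e; exact hcross s3 (Finset.mem_erase.mpr hs3) (e ▸ Finset.mem_erase.mpr hs5)

lemma four_of_triples {α : Type*} [DecidableEq α] {τ τ' : Finset α}
    (h3 : τ.card = 3) (h3' : τ'.card = 3) (hne : τ ≠ τ')
    (hint : (τ ∩ τ').card = 0 ∨ (τ ∩ τ').card = 2) :
    ∃ a b c d, a ∈ τ ∧ b ∈ τ ∧ c ∈ τ' ∧ d ∈ τ' ∧
      a ≠ b ∧ a ≠ c ∧ a ≠ d ∧ b ≠ c ∧ b ≠ d ∧ c ≠ d := by
  rcases hint with h0 | h2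
  · have hdisj : ∀ u, u ∈ τ → u ∈ τ' → False := by
      intro u hu hu'
      have : u ∈ τ ∩ τ' := Finset.mem_inter.mpr ⟨hu, hu'⟩
      rw [Finset.card_eq_zero.mp h0] at this
      exact absurd this (Finset.notMem_empty u)
    obtain ⟨a, ha, b, hb, hab⟩ := two_distinct (by omega : 2 ≤ τ.card)
    obtain ⟨c, hc, d, hd, hcd⟩ := two_distinct (by omega : 2 ≤ τ'.card)
    exact ⟨a, b, c, d, ha, hb, hc, hd, hab,
      fun e => hdisj a ha (e ▸ hc), fun e => hdisj a ha (e ▸ hd),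
      fun e => hdisj b hb (e ▸ hc), fun e => hdisj b hb (e ▸ hd), hcd⟩
  · -- |τ ∩ τ'| = 2 : take a ∈ τ \ τ', b ∈ τ ∩ τ', c ∈ τ ∩ τ' other, d ∈ τ' \ τ
    have hsd : (τ \ τ').card = 1 := by
      have := Finset.card_sdiff_add_card_inter τ τ'
      omega
    have hsd' : (τ' \ τ).card = 1 := by
      have := Finset.card_sdiff_add_card_inter τ' τ
      rw [Finset.inter_comm] at this
      omega
    obtain ⟨a, haeq⟩ := Finset.card_eq_one.mp hsd
    obtain ⟨d, hdeq⟩ := Finset.card_eq_one.mp hsd'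
    obtain ⟨b, hbm, c, hcm, hbc⟩ := two_distinct (by omega : 2 ≤ (τ ∩ τ').card)
    have ham : a ∈ τ \ τ' := haeq ▸ Finset.mem_singleton_self a
    have hdm : d ∈ τ' \ τ := hdeq ▸ Finset.mem_singleton_self d
    simp only [Finset.mem_sdiff] at ham hdm
    simp only [Finset.mem_inter] at hbm hcm
    refine ⟨a, b, c, d, ham.1, hbm.1, hcm.2, hdm.1, ?_, ?_, ?_, hbc, ?_, ?_⟩
    · intro e; exact ham.2 (e ▸ hbm.2)
    · intro e; exact ham.2 (e ▸ hcm.2)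
    · intro e; exact hdm.2 (e ▸ ham.1)
    · intro e; exact hdm.2 (e ▸ hbm.1)
    · intro e; exact hdm.2 (e ▸ hcm.1)

open Classical in
noncomputable def ddF (G : SimpleGraph V) (S : Finset V) (u : V) : Finset V :=
  S.filter fun s => G.Adj s u

lemma mem_ddF {G : SimpleGraph V} {S : Finset V} {u v : V} :
    v ∈ ddF G S u ↔ v ∈ S ∧ G.Adj v u := by
  classical
  unfold ddF; exact Finset.mem_filter

open Classical in
noncomputable def wselF (G : SimpleGraph V) (x : V) (e : Finset V) : V :=
  if h : ∃ u, ∀ s ∈ e, G.Adj s u then h.choose else x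

lemma wselF_spec {G : SimpleGraph V} {x : V} {e : Finset V}
    (he : ∃ u, ∀ s ∈ e, G.Adj s u) : ∀ s ∈ e, G.Adj s (wselF G x e) := by
  unfold wselF; rw [dif_pos he]; exact he.choose_spec

open Classical in
noncomputable def aselF (G : SimpleGraph V) (x v : V) : V :=
  if h : ∃ a, G.Adj x a ∧ G.Adj a v then h.choose else x

lemma aselF_spec {G : SimpleGraph V} {x v : V}
    (h : ∃ a, G.Adj x a ∧ G.Adj a v) :
    G.Adj x (aselF G x v) ∧ G.Adj (aselF G x v) v := by
  unfold aselF; rw [dif_pos h]; exact h.choose_spec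

open Classical in
noncomputable def wsel3F (G : SimpleGraph V) (x : V) (S τ : Finset V) : V :=
  if h : ∃ u, ddF G S u = τ then h.choose else x

lemma wsel3F_spec {G : SimpleGraph V} {x : V} {S τ : Finset V}
    (h : ∃ u, ddF G S u = τ) : ddF G S (wsel3F G x S τ) = τ := by
  unfold wsel3F; rw [dif_pos h]; exact h.choose_spec

/-- Let `G` be a connected graph of diameter 2 with goal vertex `x`, and let `p` be a
pebble distribution of size `m`.  If no vertex of `{x} ∪ N(x)` is reachable using only
five pebbles of `p`, then `G` has at least `⌊(m² + 3)/2⌋` vertices. -/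
theorem card_ge_of_not_reachable_five {V : Type*} [Fintype V] (G : SimpleGraph V)
    (hconn : G.Connected) (hdiam : G.diam = 2) (x : V) (p : V → ℕ) (m : ℕ)
    (hm : ∑ v, p v = m)
    (h : ∀ q : V → ℕ, (∀ v, q v ≤ p v) → ∑ v, q v ≤ 5 →
      ∀ y, y = x ∨ G.Adj x y → ¬ RubblingReachable G q y) :
    (m ^ 2 + 3) / 2 ≤ Fintype.card V := by
  classical
  have hB : Blocked G x p := h
  set S : Finset V := Finset.univ.filter (fun v => 1 ≤ p v) with hSdef
  have hSmem : ∀ v, v ∈ S ↔ 1 ≤ p v := fun v => by simp [hSdef]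
  have hSin : ∀ s, s ∈ S → 1 ≤ p s := fun s hs => (hSmem s).mp hs
  have hp0 : ∀ v, (v = x ∨ G.Adj x v) → p v = 0 := by
    intro v hv; by_contra hnz; exact kill1 hB (by omega) hv
  have hxS : ∀ v, 1 ≤ p v → v ≠ x ∧ ¬ G.Adj x v := by
    intro v hv
    constructor
    · rintro rfl; have := hp0 v (Or.inl rfl); omega
    · intro ha; have := hp0 v (Or.inr ha); omega
  have hnbr : ∀ v, v ≠ x → ¬ G.Adj x v → ∃ a, G.Adj x a ∧ G.Adj a v := by
    intro v hvx hva
    exact common_mid G hconn hdiam (fun e => hvx e.symm) hva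
  have hp1 : ∀ v, p v ≤ 1 := by
    intro v; by_contra hc
    obtain ⟨hvx, hva⟩ := hxS v (by omega)
    obtain ⟨a, hxa, hav⟩ := hnbr v hvx hva
    exact kill2 hB (by omega) hav.symm (Or.inr hxa)
  have hmS : m = S.card := by
    have hsplit := Finset.sum_filter_add_sum_filter_not Finset.univ (fun v => 1 ≤ p v) p
    have h1 : ∑ v ∈ Finset.univ.filter (fun v => ¬ 1 ≤ p v), p v = 0 := by
      apply Finset.sum_eq_zero; intro v hv
      have := (Finset.mem_filter.mp hv).2; omega
    have h2 : ∑ v ∈ S, p v = S.card := by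
      rw [Finset.card_eq_sum_ones]
      apply Finset.sum_congr rfl
      intro v hv; have := (hSmem v).mp hv; have := hp1 v; omega
    rw [← hSdef] at hsplit
    omega
  have hcommon : ∀ s t a, s ∈ S → t ∈ S → s ≠ t → G.Adj s a → G.Adj t a →
      ¬(a = x ∨ G.Adj x a) := by
    intro s t a hs ht hst hsa hta hy
    exact kill_pair hB hst (hSin s hs) (hSin t ht) hsa hta hy
  have hnotxA : ∀ s t w, s ∈ S → t ∈ S → s ≠ t → G.Adj s w → G.Adj t w →
      w ≠ x ∧ ¬ G.Adj x w := by
    intro s t w hs ht hst hsw htw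
    have hny := hcommon s t w hs ht hst hsw htw
    exact ⟨fun e => hny (Or.inl e), fun hh => hny (Or.inr hh)⟩
  have hwnotS : ∀ s t w, s ∈ S → t ∈ S → s ≠ t → G.Adj s w → G.Adj t w → w ∉ S := by
    intro s t w hs ht hst hsw htw hwS
    obtain ⟨hwx, hwa⟩ := hnotxA s t w hs ht hst hsw htw
    obtain ⟨a, hxa, haw⟩ := hnbr w hwx hwa
    exact kill3b hB hst (hSin s hs) (hSin t ht) (hSin w hwS) hsw htw haw.symm (Or.inr hxa)
  have hDD3 : ∀ u, (ddF G S u).card ≤ 3 := by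
    intro u; by_contra hc
    obtain ⟨a, b, c, d, ha, hb, hcc, hdd, hab, hac, had, hbc, hbd, hcd⟩ :=
      four_distinct (s := ddF G S u) (by omega)
    rw [mem_ddF] at ha hb hcc hdd
    obtain ⟨hux, hua⟩ := hnotxA a b u ha.1 hb.1 hab ha.2 hb.2
    obtain ⟨e, hxe, heu⟩ := hnbr u hux hua
    exact kill4a hB hab hac had hbc hbd hcd (hSin _ ha.1) (hSin _ hb.1)
      (hSin _ hcc.1) (hSin _ hdd.1) ha.2 hb.2 hcc.2 hdd.2 heu.symm (Or.inr hxe)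
  set Pairs := S.powersetCard 2 with hPdef
  have hpair : ∀ e ∈ Pairs, ∃ s t, s ≠ t ∧ e = {s, t} ∧ s ∈ S ∧ t ∈ S := by
    intro e he
    obtain ⟨hsub, hc2⟩ := Finset.mem_powersetCard.mp he
    obtain ⟨s, t, hst, rfl⟩ := Finset.card_eq_two.mp hc2
    exact ⟨s, t, hst, rfl, hsub (by simp), hsub (by simp)⟩
  set NE := Pairs.filter (fun e => ∃ u, ∀ s ∈ e, G.Adj s u) with hNEdef
  set E := Pairs.filter (fun e => ¬ ∃ u, ∀ s ∈ e, G.Adj s u) with hEdef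
  have hENE : NE.card + E.card = Pairs.card :=
    Finset.card_filter_add_card_filter_not _
  have hEadj : ∀ e ∈ E, ∀ a b, a ∈ e → b ∈ e → a ≠ b → G.Adj a b := by
    intro e he a b ha hb hab
    have heP := Finset.mem_filter.mp he
    by_contra hnadj
    obtain ⟨w, haw, hwb⟩ := common_mid G hconn hdiam hab hnadj
    apply heP.2
    refine ⟨w, ?_⟩
    intro s hs
    have hc2 : e.card = 2 := (Finset.mem_powersetCard.mp heP.1).2
    have habsub : ({a, b} : Finset V) ⊆ e := by
      intro z hz
      rcases Finset.mem_insert.mp hz with rfl | hz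
      · exact ha
      · rw [Finset.mem_singleton.mp hz]; exact hb
    have hpr : ({a, b} : Finset V).card = 2 := Finset.card_pair hab
    have heab : ({a, b} : Finset V) = e :=
      Finset.eq_of_subset_of_card_le habsub (by omega)
    rw [← heab] at hs
    rcases Finset.mem_insert.mp hs with rfl | hs
    · exact haw
    · rw [Finset.mem_singleton.mp hs]; exact hwb.symm
  have hEdisj : ∀ e ∈ E, ∀ e' ∈ E, e ≠ e' → Disjoint e e' := by
    intro e he e' he' hne
    by_contra hnd
    obtain ⟨v, hv, hv'⟩ := Finset.not_disjoint_iff.mp hnd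
    have hc2 : e.card = 2 := (Finset.mem_powersetCard.mp (Finset.mem_filter.mp he).1).2
    have hc2' : e'.card = 2 := (Finset.mem_powersetCard.mp (Finset.mem_filter.mp he').1).2
    have hsubS : e ⊆ S := (Finset.mem_powersetCard.mp (Finset.mem_filter.mp he).1).1
    have hsubS' : e' ⊆ S := (Finset.mem_powersetCard.mp (Finset.mem_filter.mp he').1).1
    obtain ⟨s, hseq⟩ := Finset.card_eq_one.mp
      (show (e.erase v).card = 1 by rw [Finset.card_erase_of_mem hv, hc2])
    obtain ⟨t, hteq⟩ := Finset.card_eq_one.mp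
      (show (e'.erase v).card = 1 by rw [Finset.card_erase_of_mem hv', hc2'])
    have hsm : s ∈ e.erase v := hseq ▸ Finset.mem_singleton_self s
    have htm : t ∈ e'.erase v := hteq ▸ Finset.mem_singleton_self t
    rw [Finset.mem_erase] at hsm htm
    have hst : s ≠ t := by
      rintro rfl
      apply hne
      have he1 : e = insert v (e.erase v) := (Finset.insert_erase hv).symm
      have he2 : e' = insert v (e'.erase v) := (Finset.insert_erase hv').symm
      rw [he1, he2, hseq, hteq]
    have hadj1 : G.Adj s v := hEadj e he s v hsm.2 hv hsm.1
    have hadj2 : G.Adj t v := hEadj e' he' t v htm.2 hv' htm.1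
    exact hwnotS s t v (hsubS hsm.2) (hsubS' htm.2) hst hadj1 hadj2 (hsubS hv)
  have hEcard : 2 * E.card ≤ S.card := by
    have h1 : (E.biUnion id).card = ∑ e ∈ E, e.card := Finset.card_biUnion hEdisj
    have h2 : ∑ e ∈ E, e.card = 2 * E.card := by
      have hh : ∀ e ∈ E, e.card = 2 := fun e he =>
        (Finset.mem_powersetCard.mp (Finset.mem_filter.mp he).1).2
      calc ∑ e ∈ E, e.card = ∑ _e ∈ E, 2 := Finset.sum_congr rfl hh
        _ = 2 * E.card := by rw [Finset.sum_const, smul_eq_mul, mul_comm]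
    have h3 : E.biUnion id ⊆ S := Finset.biUnion_subset.mpr
      (fun e he => (Finset.mem_powersetCard.mp (Finset.mem_filter.mp he).1).1)
    have h4 := Finset.card_le_card h3
    omega
  have hNEw : ∀ e ∈ NE, ∀ s ∈ e, G.Adj s (wselF G x e) := by
    intro e he; exact wselF_spec (Finset.mem_filter.mp he).2
  have hNEsub : ∀ e ∈ NE, e ⊆ ddF G S (wselF G x e) := by
    intro e he s hs
    rw [mem_ddF]
    exact ⟨(Finset.mem_powersetCard.mp (Finset.mem_filter.mp he).1).1 hs,
      hNEw e he s hs⟩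
  have hNE2le : ∀ e ∈ NE, 2 ≤ (ddF G S (wselF G x e)).card := by
    intro e he
    have h1 := Finset.card_le_card (hNEsub e he)
    have hc2 : e.card = 2 := (Finset.mem_powersetCard.mp (Finset.mem_filter.mp he).1).2
    omega
  set NE2 := NE.filter (fun e => (ddF G S (wselF G x e)).card = 2) with hNE2def
  set NE3 := NE.filter (fun e => ¬ (ddF G S (wselF G x e)).card = 2) with hNE3def
  have hNE23 : NE2.card + NE3.card = NE.card :=
    Finset.card_filter_add_card_filter_not _
  have hNE3card : ∀ e ∈ NE3, (ddF G S (wselF G x e)).card = 3 := by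
    intro e he
    have h1 := Finset.mem_filter.mp he
    have h2 := hNE2le e h1.1
    have h3 := hDD3 (wselF G x e)
    have h4 := h1.2
    omega
  set W2 := NE2.image (wselF G x) with hW2def
  set W3 := NE3.image (wselF G x) with hW3def
  have hW2card : W2.card = NE2.card := by
    rw [hW2def]
    apply Finset.card_image_of_injOn
    intro e he e' he' heq
    have h1 := Finset.mem_filter.mp he
    have h1' := Finset.mem_filter.mp he'
    have hc2 : e.card = 2 := (Finset.mem_powersetCard.mp (Finset.mem_filter.mp h1.1).1).2
    have hc2' : e'.card = 2 := (Finset.mem_powersetCard.mp (Finset.mem_filter.mp h1'.1).1).2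
    have he1 : e = ddF G S (wselF G x e) :=
      Finset.eq_of_subset_of_card_le (hNEsub e h1.1) (by omega)
    have he2 : e' = ddF G S (wselF G x e') :=
      Finset.eq_of_subset_of_card_le (hNEsub e' h1'.1) (by
        have := h1'.2
        omega)
    rw [he1, he2, heq]
  set T := NE3.image (fun e => ddF G S (wselF G x e)) with hTdef
  have hT3 : ∀ τ ∈ T, τ.card = 3 := by
    intro τ hτ
    obtain ⟨e, he, rfl⟩ := Finset.mem_image.mp hτ
    exact hNE3card e he
  have hTsubS : ∀ τ ∈ T, τ ⊆ S := by
    intro τ hτ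
    obtain ⟨e, he, rfl⟩ := Finset.mem_image.mp hτ
    intro s hs; exact (mem_ddF.mp hs).1
  have hTW : ∀ τ ∈ T, ∃ u, ddF G S u = τ := by
    intro τ hτ
    obtain ⟨e, he, rfl⟩ := Finset.mem_image.mp hτ
    exact ⟨wselF G x e, rfl⟩
  have hTcap : ∀ τ ∈ T, ∀ τ' ∈ T, τ ≠ τ' → (τ ∩ τ').card = 0 ∨ (τ ∩ τ').card = 2 := by
    intro τ hτ τ' hτ' hne
    obtain ⟨u, hu⟩ := hTW τ hτ
    obtain ⟨u', hu'⟩ := hTW τ' hτ'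
    have huu : u ≠ u' := by
      rintro rfl; rw [hu] at hu'; exact hne hu'
    have hcap3 : (τ ∩ τ').card ≤ 3 := by
      have := Finset.card_le_card (show τ ∩ τ' ⊆ τ from Finset.inter_subset_left)
      rw [hT3 τ hτ] at this; exact this
    have hne3 : (τ ∩ τ').card ≠ 3 := by
      intro h3
      have hi : τ ∩ τ' = τ := Finset.eq_of_subset_of_card_le Finset.inter_subset_left
        (by rw [hT3 τ hτ, h3])
      have hsub : τ ⊆ τ' := by rw [← hi]; exact Finset.inter_subset_right
      exact hne (Finset.eq_of_subset_of_card_le hsub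
        (by rw [hT3 τ hτ, hT3 τ' hτ']))
    have hne1 : (τ ∩ τ').card ≠ 1 := by
      intro h1
      obtain ⟨s1, s2, s3, s4, s5, h1τ, h1τ', h2τ, h3τ, h4τ', h5τ',
        d12, d13, d14, d15, d23, d24, d25, d34, d35, d45⟩ :=
        share_one_struct (hT3 τ hτ) (hT3 τ' hτ') h1
      rw [← hu] at h1τ h2τ h3τ
      rw [← hu'] at h1τ' h4τ' h5τ'
      rw [mem_ddF] at h1τ h1τ' h2τ h3τ h4τ' h5τ'
      obtain ⟨b, hxb, hbs1⟩ := hnbr s1 (hxS s1 (hSin _ h1τ.1)).1 (hxS s1 (hSin _ h1τ.1)).2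
      exact kill5 hB d12 d13 d14 d15 d23 d24 d25 d34 d35 d45 huu
        (hSin _ h1τ.1) (hSin _ h2τ.1) (hSin _ h3τ.1) (hSin _ h4τ'.1) (hSin _ h5τ'.1)
        h2τ.2 h3τ.2 h4τ'.2 h5τ'.2 h1τ.2.symm h1τ'.2.symm hbs1.symm (Or.inr hxb)
    omega
  have hNE3sub : NE3 ⊆ T.biUnion (fun τ => τ.powersetCard 2) := by
    intro e he
    apply Finset.mem_biUnion.mpr
    refine ⟨ddF G S (wselF G x e), Finset.mem_image_of_mem _ he, ?_⟩
    have heNE : e ∈ NE := (Finset.mem_filter.mp he).1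
    exact Finset.mem_powersetCard.mpr ⟨hNEsub e heNE,
      (Finset.mem_powersetCard.mp (Finset.mem_filter.mp heNE).1).2⟩
  have hcomb := comb T hT3 hTcap
  have hTbU : (T.biUnion id).card ≤ S.card :=
    Finset.card_le_card (Finset.biUnion_subset.mpr hTsubS)
  have hNE3T : 3 * NE3.card ≤ 6 * T.card + S.card := by
    have := Finset.card_le_card hNE3sub
    omega
  have hTW3 : T.card ≤ W3.card := by
    have himg : T = W3.image (fun u => ddF G S u) := by
      rw [hTdef, hW3def, Finset.image_image]
      rfl
    rw [himg]
    exact Finset.card_image_le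
  have haS : ∀ s ∈ S, G.Adj x (aselF G x s) ∧ G.Adj (aselF G x s) s := by
    intro s hs
    have h1 := hxS s (hSin s hs)
    exact aselF_spec (hnbr s h1.1 h1.2)
  set AS := S.image (aselF G x) with hASdef
  have hAScard : AS.card = S.card := by
    rw [hASdef]
    apply Finset.card_image_of_injOn
    intro s hs t ht heq
    by_contra hst
    have h1 : G.Adj s (aselF G x s) := (haS s hs).2.symm
    have h2 : G.Adj t (aselF G x s) := by
      have := (haS t ht).2.symm
      rw [← heq] at this
      exact this
    exact hcommon s t (aselF G x s) hs ht hst h1 h2 (Or.inr (haS s hs).1)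
  have hwt : ∀ τ ∈ T, ddF G S (wsel3F G x S τ) = τ := fun τ hτ => wsel3F_spec (hTW τ hτ)
  have htwo : ∀ τ ∈ T, ∃ a b, a ≠ b ∧ (a ∈ S ∧ G.Adj a (wsel3F G x S τ)) ∧
      (b ∈ S ∧ G.Adj b (wsel3F G x S τ)) := by
    intro τ hτ
    obtain ⟨a, ha, b, hb, hab⟩ := two_distinct (show 2 ≤ τ.card by rw [hT3 τ hτ]; omega)
    rw [← hwt τ hτ, mem_ddF] at ha hb
    exact ⟨a, b, hab, ha, hb⟩
  have hwtx : ∀ τ ∈ T, (wsel3F G x S τ) ≠ x ∧ ¬ G.Adj x (wsel3F G x S τ) := by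
    intro τ hτ
    obtain ⟨a, b, hab, ha, hb⟩ := htwo τ hτ
    exact hnotxA a b _ ha.1 hb.1 hab ha.2 hb.2
  have hwtS : ∀ τ ∈ T, wsel3F G x S τ ∉ S := by
    intro τ hτ
    obtain ⟨a, b, hab, ha, hb⟩ := htwo τ hτ
    exact hwnotS a b _ ha.1 hb.1 hab ha.2 hb.2
  have hca : ∀ τ ∈ T, G.Adj x (aselF G x (wsel3F G x S τ)) ∧
      G.Adj (aselF G x (wsel3F G x S τ)) (wsel3F G x S τ) := by
    intro τ hτ
    exact aselF_spec (hnbr _ (hwtx τ hτ).1 (hwtx τ hτ).2)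
  have hclean : ∀ τ ∈ T, ∀ s ∈ S, ¬ G.Adj s (aselF G x (wsel3F G x S τ)) := by
    intro τ hτ s hs hadj
    obtain ⟨s1, s2, s3, h12, h13, h23, hτeq⟩ := Finset.card_eq_three.mp (hT3 τ hτ)
    have hm1 : s1 ∈ τ := by rw [hτeq]; simp
    have hm2 : s2 ∈ τ := by rw [hτeq]; simp
    have hm3 : s3 ∈ τ := by rw [hτeq]; simp
    rw [← hwt τ hτ, mem_ddF] at hm1 hm2 hm3
    have hru : s ≠ wsel3F G x S τ := by
      intro e; exact hwtS τ hτ (e ▸ hs)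
    have hua : G.Adj (wsel3F G x S τ) (aselF G x (wsel3F G x S τ)) := (hca τ hτ).2.symm
    have hy : (aselF G x (wsel3F G x S τ)) = x ∨ G.Adj x (aselF G x (wsel3F G x S τ)) :=
      Or.inr (hca τ hτ).1
    by_cases e1 : s = s1
    · exact kill3a hB h23 (e1 ▸ h12) (e1 ▸ h13) hru (hSin _ hm2.1) (hSin _ hm3.1)
        (hSin s hs) hm2.2 hm3.2 hadj hua hy
    · by_cases e2 : s = s2
      · exact kill3a hB h13 (e2 ▸ h12.symm) (e2 ▸ h23) hru (hSin _ hm1.1) (hSin _ hm3.1)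
          (hSin s hs) hm1.2 hm3.2 hadj hua hy
      · exact kill3a hB h12 e1 e2 hru (hSin _ hm1.1) (hSin _ hm2.1)
          (hSin s hs) hm1.2 hm2.2 hadj hua hy
  set CA := T.image (fun τ => aselF G x (wsel3F G x S τ)) with hCAdef
  have hCAcard : CA.card = T.card := by
    rw [hCAdef]
    apply Finset.card_image_of_injOn
    intro τ hτ τ' hτ' heq
    simp only [] at heq
    by_contra hne
    obtain ⟨a, b, c, d, haτ, hbτ, hcτ', hdτ', hab, hac, had, hbc, hbd, hcd⟩ :=
      four_of_triples (hT3 τ hτ) (hT3 τ' hτ') hne (hTcap τ hτ τ' hτ' hne)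
    have hwne : wsel3F G x S τ ≠ wsel3F G x S τ' := by
      intro e; apply hne
      rw [← hwt τ hτ, ← hwt τ' hτ', e]
    rw [← hwt τ hτ, mem_ddF] at haτ hbτ
    rw [← hwt τ' hτ', mem_ddF] at hcτ' hdτ'
    have hu'a : G.Adj (wsel3F G x S τ') (aselF G x (wsel3F G x S τ)) := by
      have := (hca τ' hτ').2.symm
      rw [← heq] at this
      exact this
    exact kill4b hB hab hac had hbc hbd hcd hwne (hSin _ haτ.1) (hSin _ hbτ.1)
      (hSin _ hcτ'.1) (hSin _ hdτ'.1) haτ.2 hbτ.2 hcτ'.2 hdτ'.2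
      (hca τ hτ).2.symm hu'a (Or.inr (hca τ hτ).1)
  have hW23 : Disjoint W2 W3 := by
    rw [Finset.disjoint_left]
    intro u hu2 hu3
    obtain ⟨e, he, heqq⟩ := Finset.mem_image.mp hu2
    obtain ⟨e', he', heq'⟩ := Finset.mem_image.mp hu3
    have c2 : (ddF G S (wselF G x e)).card = 2 := (Finset.mem_filter.mp he).2
    have c3 := hNE3card e' he'
    rw [heq', ← heqq] at c3
    omega
  have hB1card : (W2 ∪ W3).card = NE2.card + W3.card := by
    rw [Finset.card_union_of_disjoint hW23, hW2card]
  have hASCA : Disjoint AS CA := by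
    rw [Finset.disjoint_left]
    intro a haAS haCA
    obtain ⟨s, hs, heqs⟩ := Finset.mem_image.mp haAS
    obtain ⟨τ, hτ, heqτ⟩ := Finset.mem_image.mp haCA
    apply hclean τ hτ s hs
    rw [heqτ, ← heqs]
    exact (haS s hs).2.symm
  have hB2card : (AS ∪ CA).card = S.card + T.card := by
    rw [Finset.card_union_of_disjoint hASCA, hAScard, hCAcard]
  have hWprop : ∀ u ∈ W2 ∪ W3, (u ≠ x ∧ ¬ G.Adj x u) ∧ u ∉ S := by
    intro u hu
    have hex : ∃ e ∈ NE, wselF G x e = u := by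
      rcases Finset.mem_union.mp hu with h2 | h3
      · obtain ⟨e, he, hh⟩ := Finset.mem_image.mp h2
        exact ⟨e, (Finset.mem_filter.mp he).1, hh⟩
      · obtain ⟨e, he, hh⟩ := Finset.mem_image.mp h3
        exact ⟨e, (Finset.mem_filter.mp he).1, hh⟩
    obtain ⟨e, heNE, rfl⟩ := hex
    obtain ⟨s, t, hst, heq, hsS, htS⟩ := hpair e (Finset.mem_filter.mp heNE).1
    have has : G.Adj s (wselF G x e) := hNEw e heNE s (by rw [heq]; simp)
    have hat : G.Adj t (wselF G x e) := hNEw e heNE t (by rw [heq]; simp)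
    exact ⟨hnotxA s t _ hsS htS hst has hat, hwnotS s t _ hsS htS hst has hat⟩
  have hB2prop : ∀ a ∈ AS ∪ CA, G.Adj x a := by
    intro a ha
    rcases Finset.mem_union.mp ha with h1 | h1
    · obtain ⟨s, hs, rfl⟩ := Finset.mem_image.mp h1; exact (haS s hs).1
    · obtain ⟨τ, hτ, rfl⟩ := Finset.mem_image.mp h1; exact (hca τ hτ).1
  have hd1 : Disjoint S (W2 ∪ W3) := by
    rw [Finset.disjoint_left]
    intro s hsS hsW
    exact (hWprop s hsW).2 hsS
  have hd2 : Disjoint S (AS ∪ CA) := by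
    rw [Finset.disjoint_left]
    intro s hsS hsB
    exact (hxS s (hSin s hsS)).2 (hB2prop s hsB)
  have hd3 : Disjoint (W2 ∪ W3) (AS ∪ CA) := by
    rw [Finset.disjoint_left]
    intro u huW huB
    exact (hWprop u huW).1.2 (hB2prop u huB)
  have hxnot : x ∉ S ∪ (W2 ∪ W3) ∪ (AS ∪ CA) := by
    intro hx
    rcases Finset.mem_union.mp hx with hx1 | hx1
    · rcases Finset.mem_union.mp hx1 with hx2 | hx2
      · exact (hxS x (hSin x hx2)).1 rfl
      · exact (hWprop x hx2).1.1 rfl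
    · exact G.irrefl (hB2prop x hx1)
  have htotal : (insert x (S ∪ (W2 ∪ W3) ∪ (AS ∪ CA))).card =
      1 + S.card + (NE2.card + W3.card) + (S.card + T.card) := by
    rw [Finset.card_insert_of_notMem hxnot]
    have d12 : Disjoint (S ∪ (W2 ∪ W3)) (AS ∪ CA) :=
      Finset.disjoint_union_left.mpr ⟨hd2, hd3⟩
    rw [Finset.card_union_of_disjoint d12, Finset.card_union_of_disjoint hd1,
      hB1card, hB2card]
    omega
  have hle : (insert x (S ∪ (W2 ∪ W3) ∪ (AS ∪ CA))).card ≤ Fintype.card V := by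
    rw [← Finset.card_univ]
    exact Finset.card_le_card (Finset.subset_univ _)
  have hPc : Pairs.card = S.card.choose 2 := Finset.card_powersetCard 2 S
  have hchoose : 2 * (S.card.choose 2) + S.card = S.card ^ 2 := by
    rw [Nat.choose_two_right]
    have hdvd : 2 ∣ S.card * (S.card - 1) := by
      rcases Nat.even_or_odd S.card with he | ho
      · exact Dvd.dvd.mul_right he.two_dvd _
      · have : Even (S.card - 1) := Nat.Odd.sub_odd ho odd_one
        exact Dvd.dvd.mul_left this.two_dvd _
    rw [Nat.mul_div_cancel' hdvd]
    cases hSc : S.card with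
    | zero => simp
    | succ n => simp [Nat.succ_sub_one]; ring
  rw [hmS]
  omega
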